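/- Let λ be an F-invariant probability measure on ℝ^{2p} and π a probability measure with π = λ on the σ-field G of F-invariant Borel sets. Then λ = 2^{-p} Σ_{f ∈ F} π ∘ f⁻¹. -/
import Mathlib


open MeasureTheory Set ENNReal
open scoped Classical

/-- The swap map `f_S` on `ℝ^p × ℝ^p`. -/
noncomputable def swapMap (p : ℕ) (S : Finset (Fin p)) :
    ((Fin p → ℝ) × (Fin p → ℝ)) → ((Fin p → ℝ) × (Fin p → ℝ)) :=
  fun z => (fun i => if i ∈ S then z.2 i else z.1 i,
            fun i => if i ∈ S then z.1 i else z.2 i)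

abbrev SwapX (p : ℕ) := (Fin p → ℝ) × (Fin p → ℝ)

lemma measurable_swapMap (p : ℕ) (S : Finset (Fin p)) : Measurable (swapMap p S) := by
  unfold swapMap
  apply Measurable.prod <;> dsimp <;>
  · apply measurable_pi_lambda
    intro i
    by_cases h : i ∈ S <;> simp [h] <;>
      exact (measurable_pi_apply i).comp (by measurability)

lemma swapMap_comp (p : ℕ) (S T : Finset (Fin p)) (z : SwapX p) :
    swapMap p S (swapMap p T z) = swapMap p (symmDiff S T) z := by
  unfold swapMap
  refine Prod.ext ?_ ?_ <;> funext i <;> dsimp <;>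
    by_cases h1 : i ∈ S <;> by_cases h2 : i ∈ T <;>
    simp [h1, h2, Finset.mem_symmDiff]

def invSigma (p : ℕ) : MeasurableSpace (SwapX p) where
  MeasurableSet' s := MeasurableSet s ∧ ∀ S, swapMap p S ⁻¹' s = s
  measurableSet_empty := ⟨MeasurableSet.empty, fun S => by simp⟩
  measurableSet_compl s hs := ⟨hs.1.compl, fun S => by
    rw [Set.preimage_compl, hs.2]⟩
  measurableSet_iUnion f hf := ⟨MeasurableSet.iUnion fun i => (hf i).1, fun S => by
    rw [Set.preimage_iUnion]; simp_rw [fun i => (hf i).2]⟩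

lemma invSigma_le (p : ℕ) : invSigma p ≤ (inferInstance : MeasurableSpace (SwapX p)) :=
  fun _ hs => hs.1

/-- count of swaps sending x into A -/
noncomputable def swapCount (p : ℕ) (A : Set (SwapX p)) (x : SwapX p) : ℕ :=
  (Finset.univ.filter (fun S : Finset (Fin p) => swapMap p S x ∈ A)).card

lemma swapCount_comp (p : ℕ) (A : Set (SwapX p)) (T : Finset (Fin p)) (x : SwapX p) :
    swapCount p A (swapMap p T x) = swapCount p A x := by
  unfold swapCount
  refine Finset.card_bij' (fun S _ => symmDiff S T) (fun S _ => symmDiff S T) ?_ ?_ ?_ ?_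
  · intro S hS
    simp only [Finset.mem_filter, Finset.mem_univ, true_and] at hS ⊢
    rwa [swapMap_comp] at hS
  · intro S hS
    simp only [Finset.mem_filter, Finset.mem_univ, true_and] at hS ⊢
    rwa [swapMap_comp, symmDiff_symmDiff_cancel_right]
  · intro S _; exact symmDiff_symmDiff_cancel_right T S
  · intro S _; exact symmDiff_symmDiff_cancel_right T S

lemma swapCount_eq_sum (p : ℕ) (A : Set (SwapX p)) (x : SwapX p) :
    (swapCount p A x : ℝ≥0∞)
      = ∑ S : Finset (Fin p), (swapMap p S ⁻¹' A).indicator (1 : SwapX p → ℝ≥0∞) x := by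
  unfold swapCount
  rw [Finset.card_filter]
  push_cast
  refine Finset.sum_congr rfl fun S _ => ?_
  by_cases h : swapMap p S x ∈ A <;> simp [Set.indicator_apply, h, Set.mem_preimage]

lemma measurable_swapCount (p : ℕ) (A : Set (SwapX p)) (hA : MeasurableSet A) :
    Measurable (swapCount p A) := by
  unfold swapCount
  simp_rw [Finset.card_filter]
  exact Finset.measurable_sum _ fun S _ =>
    Measurable.ite (hA.preimage (measurable_swapMap p S)) measurable_const measurable_const

lemma measurable_invSigma_swapCount (p : ℕ) (A : Set (SwapX p)) (hA : MeasurableSet A) :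
    @Measurable _ _ (invSigma p) _ (fun x => (swapCount p A x : ℝ≥0∞)) := by
  refine Measurable.comp (measurable_from_nat) ?_
  refine @measurable_to_countable' ℕ _ _ _ (invSigma p) _ (fun n => ?_)
  constructor
  · exact (measurable_swapCount p A hA) (measurableSet_singleton n)
  · intro T
    ext x
    simp [Set.mem_preimage, swapCount_comp]

lemma lintegral_swapCount (p : ℕ) (A : Set (SwapX p)) (hA : MeasurableSet A)
    (μ : Measure (SwapX p)) :
    ∫⁻ x, (swapCount p A x : ℝ≥0∞) ∂μ = ∑ S : Finset (Fin p), μ (swapMap p S ⁻¹' A) := by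
  simp_rw [swapCount_eq_sum]
  rw [lintegral_finset_sum]
  · refine Finset.sum_congr rfl fun S _ => ?_
    rw [lintegral_indicator (hA.preimage (measurable_swapMap p S))]
    simp
  · intro S _
    exact (measurable_const.indicator (hA.preimage (measurable_swapMap p S)))


/-- If `λ` is `F`-invariant and `π = λ` on the σ-field `G` of `F`-invariant Borel sets,
then `λ = 2^{-p} ∑_{f ∈ F} π ∘ f⁻¹`. -/
theorem agree_on_invariant_implies_average (p : ℕ) (hp : 2 ≤ p)
    (lam π : Measure ((Fin p → ℝ) × (Fin p → ℝ)))
    [IsProbabilityMeasure lam] [IsProbabilityMeasure π]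
    (hinv : ∀ S : Finset (Fin p), lam.map (swapMap p S) = lam)
    (hagree : ∀ A : Set ((Fin p → ℝ) × (Fin p → ℝ)), MeasurableSet A →
      (∀ S : Finset (Fin p), swapMap p S ⁻¹' A = A) → π A = lam A) :
    lam = ((2 : ℝ≥0∞) ^ p)⁻¹ • ∑ S : Finset (Fin p), π.map (swapMap p S) := by
  have htrim : π.trim (invSigma_le p) = lam.trim (invSigma_le p) := by
    refine @Measure.ext _ (invSigma p) _ _ (fun s hs => ?_)
    rw [trim_measurableSet_eq _ hs, trim_measurableSet_eq _ hs, hagree s hs.1 hs.2]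
  ext A hA
  have key : ∑ S : Finset (Fin p), π (swapMap p S ⁻¹' A)
      = ∑ S : Finset (Fin p), lam (swapMap p S ⁻¹' A) := by
    rw [← lintegral_swapCount p A hA, ← lintegral_swapCount p A hA,
      ← lintegral_trim (invSigma_le p) (measurable_invSigma_swapCount p A hA),
      ← lintegral_trim (invSigma_le p) (measurable_invSigma_swapCount p A hA), htrim]
  have hlamA : ∀ S : Finset (Fin p), lam (swapMap p S ⁻¹' A) = lam A := by
    intro S
    conv_rhs => rw [← hinv S]
    rw [Measure.map_apply (measurable_swapMap p S) hA]
  have hsum : ∑ S : Finset (Fin p), lam (swapMap p S ⁻¹' A) = (2 : ℝ≥0∞) ^ p * lam A := by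
    simp_rw [hlamA]
    rw [Finset.sum_const, Finset.card_univ, Fintype.card_finset, Fintype.card_fin,
      nsmul_eq_mul]
    push_cast
    ring
  have h2p : ((2 : ℝ≥0∞) ^ p)⁻¹ * (2 : ℝ≥0∞) ^ p = 1 :=
    ENNReal.inv_mul_cancel (pow_ne_zero _ two_ne_zero) (ENNReal.pow_ne_top ENNReal.ofNat_ne_top)
  have hmapsum : (∑ S : Finset (Fin p), π.map (swapMap p S)) A
      = ∑ S : Finset (Fin p), π (swapMap p S ⁻¹' A) := by
    rw [Measure.coe_finset_sum, Finset.sum_apply]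
    exact Finset.sum_congr rfl fun S _ => Measure.map_apply (measurable_swapMap p S) hA
  rw [Measure.smul_apply, hmapsum, key, hsum, smul_eq_mul, ← mul_assoc, h2p, one_mul]
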